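/- Let p < q be primes, let n₁, n₂ ≥ 1 be integers, and set n = p^{n₁} q^{n₂}. Then the independent domination polynomial D_i(Γ(ℤ_n), x) = φ(n)·x + x^{p^{n₁} q^{n₂−1}} + x^{p^{n₁−1} q^{n₂}} fails to be log-concave if and only if one of the following holds: (a) n₁ = n₂ = 1 and p = 3; (b) n₁ = n₂ = 1 and q = p + 2; (c) n₁ = 2, n₂ = 1, p = 2 and q = 3; (d) n₁ = n₂ = 1, p = 2 and q = 3. -/

import Mathlib

open Polynomial

/-- The comaximal graph of `ℤ/nℤ`: distinct `a, b` are adjacent iff the ideal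
generated by `a` and `b` is the whole ring. -/
def comaximalGraph (n : ℕ) : SimpleGraph (ZMod n) where
  Adj a b := a ≠ b ∧ Ideal.span ({a, b} : Set (ZMod n)) = ⊤
  symm := by
    constructor
    rintro a b ⟨hab, h⟩
    refine ⟨hab.symm, ?_⟩
    rwa [Set.pair_comm]
  loopless := by
    constructor
    rintro a ⟨h, -⟩
    exact h rfl

/-- `S` is an independent dominating set of `G`. -/
def IsIndepDomSet {V : Type*} (G : SimpleGraph V) (S : Finset V) : Prop :=
  (∀ a ∈ S, ∀ b ∈ S, ¬ G.Adj a b) ∧ ∀ v : V, v ∉ S → ∃ u ∈ S, G.Adj u v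

/-- The independent domination polynomial `D_i(G, x) = Σ_k d_i(G,k) x^k`. -/
noncomputable def indepDomPoly {V : Type*} (G : SimpleGraph V) : Polynomial ℝ :=
  ∑ k ∈ Finset.range (Nat.card V + 1),
    Polynomial.C ((Nat.card {S : Finset V // IsIndepDomSet G S ∧ S.card = k}) : ℝ) *
      Polynomial.X ^ k

/-- The independence polynomial `I(G, x) = Σ_k c_k x^k`. -/
noncomputable def indepPoly {V : Type*} (G : SimpleGraph V) : Polynomial ℝ :=
  ∑ k ∈ Finset.range (Nat.card V + 1),
    Polynomial.C ((Nat.card {S : Finset V //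
        (∀ a ∈ S, ∀ b ∈ S, ¬ G.Adj a b) ∧ S.card = k}) : ℝ) *
      Polynomial.X ^ k

/-- A real polynomial is log-concave if `a_i² ≥ a_{i−1}·a_{i+1}` for all `1 ≤ i ≤ d−1`,
where `a_0, …, a_d` is its coefficient sequence (`d` the degree). -/
def LogConcave (f : Polynomial ℝ) : Prop :=
  ∀ i, 1 ≤ i → i + 1 ≤ f.natDegree → f.coeff (i - 1) * f.coeff (i + 1) ≤ (f.coeff i) ^ 2

lemma coeff_f (r : ℝ) (a b k : ℕ) :
    (C r * X + X ^ a + X ^ b).coeff k =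
      (if k = 1 then r else 0) + (if k = a then 1 else 0) + (if k = b then 1 else 0) := by
  simp [coeff_add, coeff_C_mul, coeff_X, coeff_X_pow, mul_ite, eq_comm]

lemma deg_f (r : ℝ) (a b : ℕ) (ha : 2 ≤ a) (hab : a < b) :
    (C r * X + X ^ a + X ^ b).natDegree = b := by
  rw [natDegree_add_eq_right_of_natDegree_lt, natDegree_X_pow]
  rw [natDegree_X_pow]
  calc (C r * X + X ^ a).natDegree ≤ max (C r * X).natDegree (X ^ a : ℝ[X]).natDegree :=
        natDegree_add_le _ _
    _ < b := by
        rw [natDegree_X_pow]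
        refine max_lt ?_ hab
        exact lt_of_le_of_lt (natDegree_C_mul_le _ _) (by simp; omega)

lemma main_abs (r : ℝ) (hr : 2 ≤ r) (a b : ℕ) (ha : 2 ≤ a) (hab : a < b) :
    ¬ LogConcave (C r * X + X ^ a + X ^ b) ↔ a = 3 ∨ b = 3 ∨ b = a + 2 := by
  have hr0 : (0:ℝ) < r := by linarith
  constructor
  · intro hnlc
    by_contra hcon
    push_neg at hcon
    obtain ⟨h3a, h3b, hba⟩ := hcon
    apply hnlc
    intro i hi1 hid
    rw [deg_f r a b ha hab] at hid
    rw [coeff_f, coeff_f, coeff_f]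
    by_cases e1 : (i-1 = 1 ∨ i-1 = a ∨ i-1 = b) ∧ (i+1 = 1 ∨ i+1 = a ∨ i+1 = b)
    · omega
    · have hz : (if i-1 = 1 then r else 0) + (if i-1 = a then 1 else 0) + (if i-1 = b then 1 else 0) = 0
          ∨ (if i+1 = 1 then r else 0) + (if i+1 = a then 1 else 0) + (if i+1 = b then 1 else 0) = 0 := by
        push_neg at e1
        by_cases c1 : i-1 = 1 ∨ i-1 = a ∨ i-1 = b
        · right
          have := e1 c1
          simp [this.1, this.2.1, this.2.2]
          omega
        · left
          push_neg at c1
          simp [c1.1, c1.2.1, c1.2.2]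
      rcases hz with h | h <;> rw [h] <;> [rw [zero_mul]; rw [mul_zero]] <;> positivity
  · intro hcase hlc
    rcases hcase with h3 | h3 | h3
    · subst h3
      have := hlc 2 (by norm_num) (by rw [deg_f r 3 b ha hab]; omega)
      rw [coeff_f, coeff_f, coeff_f] at this
      have hb2 : (2:ℕ) ≠ b := by omega
      have hb3 : (3:ℕ) ≠ b := by omega
      have hb1 : (1:ℕ) ≠ b := by omega
      norm_num [hb1, hb2, hb3] at this
      linarith
    · subst h3
      have ha2 : a = 2 := by omega
      subst ha2
      have := hlc 2 (by norm_num) (by rw [deg_f r 2 3 ha hab])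
      rw [coeff_f, coeff_f, coeff_f] at this
      norm_num at this
      nlinarith
    · subst h3
      have := hlc (a+1) (by omega) (by rw [deg_f r a (a+2) ha hab])
      rw [coeff_f, coeff_f, coeff_f] at this
      have e1 : a + 1 - 1 = a := by omega
      rw [e1] at this
      have h1 : a ≠ 1 := by omega
      have h2 : a ≠ a + 2 := by omega
      have h3 : a + 1 ≠ 1 := by omega
      have h4 : a + 1 ≠ a := by omega
      have h5 : a + 1 ≠ a + 2 := by omega
      have h6 : a + 1 + 1 ≠ 1 := by omega
      have h7 : a + 1 + 1 ≠ a := by omega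
      simp [h1, h2, h3, h4, h5, h6, h7] at this
      rw [if_neg (by omega)] at this
      linarith

lemma claim1 (p q m k : ℕ) (hp : p.Prime) (hq : q.Prime) (hpq : p < q) :
    p ^ (m+1) * q ^ k = 3 ↔ m = 0 ∧ k = 0 ∧ p = 3 := by
  constructor
  · intro h
    have hp3 : p = 3 := by
      have hdvd : p ∣ 3 := by
        rw [← h]; exact dvd_mul_of_dvd_left (dvd_pow_self p (Nat.succ_ne_zero m)) _
      exact (Nat.prime_dvd_prime_iff_eq hp (by norm_num)).mp hdvd
    have hk : k = 0 := by
      by_contra hk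
      have hdvd : q ∣ 3 := by
        rw [← h]; exact dvd_mul_of_dvd_right (dvd_pow_self q hk) _
      have := (Nat.prime_dvd_prime_iff_eq hq (by norm_num)).mp hdvd
      omega
    subst hp3 hk
    simp only [pow_zero, mul_one] at h
    have : m + 1 = 1 := Nat.pow_right_injective (by norm_num) (h.trans (pow_one 3).symm)
    omega
  · rintro ⟨rfl, rfl, rfl⟩; norm_num

lemma claim2 (p q m k : ℕ) (hp : p.Prime) (hq : q.Prime) (hpq : p < q) :
    p ^ m * q ^ (k+1) = 3 ↔ m = 0 ∧ k = 0 ∧ p = 2 ∧ q = 3 := by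
  constructor
  · intro h
    have hq3 : q = 3 := by
      have hdvd : q ∣ 3 := by
        rw [← h]; exact dvd_mul_of_dvd_right (dvd_pow_self q (Nat.succ_ne_zero k)) _
      exact (Nat.prime_dvd_prime_iff_eq hq (by norm_num)).mp hdvd
    have hp2 : p = 2 := by
      have := hp.two_le; omega
    subst hq3 hp2
    have hm : m = 0 := by
      by_contra hm
      have hdvd : (2:ℕ) ∣ 3 := by
        rw [← h]; exact dvd_mul_of_dvd_left (dvd_pow_self 2 hm) _
      omega
    subst hm
    simp only [pow_zero, one_mul] at h
    have : k + 1 = 1 := Nat.pow_right_injective (by norm_num) (h.trans (pow_one 3).symm)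
    omega
  · rintro ⟨rfl, rfl, rfl, rfl⟩; norm_num

lemma claim3 (p q m k : ℕ) (hp : p.Prime) (hq : q.Prime) (hpq : p < q) :
    p ^ m * q ^ (k+1) = p ^ (m+1) * q ^ k + 2 ↔
      (m = 0 ∧ k = 0 ∧ q = p + 2) ∨ (m = 1 ∧ k = 0 ∧ p = 2 ∧ q = 3) := by
  constructor
  · intro h
    have heq : p ^ m * q ^ k * q = p ^ m * q ^ k * p + 2 := by
      have e1 : p ^ m * q ^ k * q = p ^ m * q ^ (k+1) := by ring
      have e2 : p ^ m * q ^ k * p = p ^ (m+1) * q ^ k := by ring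
      rw [e1, e2]; exact h
    obtain ⟨d, hd, hd1⟩ : ∃ d, q = p + d ∧ 1 ≤ d := ⟨q - p, by omega, by omega⟩
    have heq2 : p ^ m * q ^ k * (p + d) = p ^ m * q ^ k * p + 2 := by rw [← hd]; exact heq
    rw [Nat.mul_add] at heq2
    have htd : p ^ m * q ^ k * d = 2 := by omega
    have ht1 : 0 < p ^ m * q ^ k :=
      Nat.mul_pos (Nat.pow_pos hp.pos) (Nat.pow_pos hq.pos)
    have ht2 : p ^ m * q ^ k ≤ 2 := Nat.le_of_dvd (by norm_num) ⟨d, htd.symm⟩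
    have hcase : p ^ m * q ^ k = 1 ∨ p ^ m * q ^ k = 2 := by omega
    rcases hcase with h' | h'
    · left
      have hm : m = 0 := by
        by_contra hm
        have := (pow_eq_one_iff.mp (Nat.eq_one_of_mul_eq_one_right h')).resolve_right hm
        exact hp.one_lt.ne' this
      have hk : k = 0 := by
        by_contra hk
        have := (pow_eq_one_iff.mp (Nat.eq_one_of_mul_eq_one_left h')).resolve_right hk
        exact hq.one_lt.ne' this
      rw [h', one_mul] at htd
      exact ⟨hm, hk, by omega⟩
    · right
      rw [h'] at htd
      have hd2 : d = 1 := by omega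
      have hq3 : 3 ≤ q := by
        have := hp.two_le; omega
      have hk : k = 0 := by
        by_contra hk
        have hdvd : q ∣ 2 := h' ▸ dvd_mul_of_dvd_right (dvd_pow_self q hk) _
        have := Nat.le_of_dvd (by norm_num) hdvd
        omega
      subst hk
      simp only [pow_zero, mul_one] at h'
      have hm1 : m ≠ 0 := by
        rintro rfl; simp at h'
      have hp2 : p = 2 := by
        have hdvd : p ∣ 2 := h' ▸ dvd_pow_self p hm1
        have := Nat.le_of_dvd (by norm_num) hdvd
        have := hp.two_le
        omega
      subst hp2
      have hm : m = 1 := Nat.pow_right_injective (le_refl 2) (h'.trans (pow_one 2).symm)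
      exact ⟨hm, rfl, rfl, by omega⟩
  · rintro (⟨rfl, rfl, rfl⟩ | ⟨rfl, rfl, rfl, rfl⟩) <;> norm_num

/-- For primes `p < q` and `n₁, n₂ ≥ 1`, with `n = p^{n₁} q^{n₂}`, the polynomial
`D_i(Γ(ℤ_n), x) = φ(n)·x + x^(p^{n₁} q^{n₂−1}) + x^(p^{n₁−1} q^{n₂})` fails to be
log-concave iff (a) `n₁ = n₂ = 1, p = 3`, or (b) `n₁ = n₂ = 1, q = p + 2`, or
(c) `n₁ = 2, n₂ = 1, p = 2, q = 3`, or (d) `n₁ = n₂ = 1, p = 2, q = 3`. -/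
theorem stmt_13 (p q n₁ n₂ : ℕ) (hp : p.Prime) (hq : q.Prime) (hpq : p < q)
    (h1 : 1 ≤ n₁) (h2 : 1 ≤ n₂) :
    ¬ LogConcave (Polynomial.C ((Nat.totient (p ^ n₁ * q ^ n₂) : ℝ)) * Polynomial.X +
        Polynomial.X ^ (p ^ n₁ * q ^ (n₂ - 1)) +
        Polynomial.X ^ (p ^ (n₁ - 1) * q ^ n₂)) ↔
      ((n₁ = 1 ∧ n₂ = 1 ∧ p = 3) ∨
       (n₁ = 1 ∧ n₂ = 1 ∧ q = p + 2) ∨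
       (n₁ = 2 ∧ n₂ = 1 ∧ p = 2 ∧ q = 3) ∨
       (n₁ = 1 ∧ n₂ = 1 ∧ p = 2 ∧ q = 3)) := by
  obtain ⟨m, rfl⟩ : ∃ m, n₁ = m + 1 := ⟨n₁ - 1, by omega⟩
  obtain ⟨k, rfl⟩ : ∃ k, n₂ = k + 1 := ⟨n₂ - 1, by omega⟩
  simp only [Nat.add_sub_cancel]
  have hp2 := hp.two_le
  have hq3 : 3 ≤ q := by omega
  -- basic facts
  have ha : 2 ≤ p ^ (m+1) * q ^ k := by
    calc 2 ≤ p := hp2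
      _ ≤ p ^ (m+1) := Nat.le_self_pow (Nat.succ_ne_zero m) p
      _ ≤ p ^ (m+1) * q ^ k := Nat.le_mul_of_pos_right _ (Nat.pow_pos hq.pos)
  have hab : p ^ (m+1) * q ^ k < p ^ m * q ^ (k+1) := by
    have e1 : p ^ (m+1) * q ^ k = p ^ m * q ^ k * p := by ring
    have e2 : p ^ m * q ^ (k+1) = p ^ m * q ^ k * q := by ring
    rw [e1, e2]
    exact Nat.mul_lt_mul_of_pos_left hpq
      (Nat.mul_pos (Nat.pow_pos hp.pos) (Nat.pow_pos hq.pos))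
  have htot : 2 ≤ Nat.totient (p ^ (m+1) * q ^ (k+1)) := by
    have hn3 : 3 ≤ p ^ (m+1) * q ^ (k+1) := by
      calc 3 ≤ 2 * 3 := by norm_num
        _ ≤ p ^ (m+1) * q ^ (k+1) := Nat.mul_le_mul
            (le_trans hp2 (Nat.le_self_pow (Nat.succ_ne_zero m) p))
            (le_trans hq3 (Nat.le_self_pow (Nat.succ_ne_zero k) q))
    have hpos : 0 < Nat.totient (p ^ (m+1) * q ^ (k+1)) :=
      Nat.totient_pos.mpr (by omega)
    have hne1 : Nat.totient (p ^ (m+1) * q ^ (k+1)) ≠ 1 := by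
      intro h
      rcases Nat.totient_eq_one_iff.mp h with h' | h' <;> omega
    omega
  have hr : (2:ℝ) ≤ (Nat.totient (p ^ (m+1) * q ^ (k+1)) : ℝ) := by exact_mod_cast htot
  rw [main_abs _ hr _ _ ha hab, claim1 p q m k hp hq hpq, claim3 p q m k hp hq hpq,
    claim2 p q m k hp hq hpq]
  omega
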